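/- Let X be the random variable whose distribution is given by the q-binomial coefficient binomial(a+b, b)_q / binomial(a+b,b)_1 (i.e., distribution of the 'area' statistic). Then the expected value of X is ab/2 and the variance of X is ab(a+b+1)/12. -/

import Mathlib

open Polynomial

/-- The `q`-integer `[m]_q = 1 + q + ⋯ + q^{m-1}` as a polynomial over `ℚ`. -/
noncomputable def qInt (m : ℕ) : Polynomial ℚ :=
  ∑ j ∈ Finset.range m, Polynomial.X ^ j

/-- Expectation of the random variable taking value `j` with probability
proportional to the coefficient of `q^j` in `F`. -/
noncomputable def polyExp (F : Polynomial ℚ) : ℚ :=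
  (∑ j ∈ Finset.range (F.natDegree + 1), (j : ℚ) * F.coeff j) / F.eval 1

/-- Variance of the random variable taking value `j` with probability
proportional to the coefficient of `q^j` in `F`. -/
noncomputable def polyVar (F : Polynomial ℚ) : ℚ :=
  (∑ j ∈ Finset.range (F.natDegree + 1), (j : ℚ) ^ 2 * F.coeff j) / F.eval 1
    - polyExp F ^ 2

noncomputable def e0 (P : Polynomial ℚ) : ℚ := P.eval 1
noncomputable def e1 (P : Polynomial ℚ) : ℚ := (derivative P).eval 1
noncomputable def e2 (P : Polynomial ℚ) : ℚ := (derivative (derivative P)).eval 1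

lemma e0_mul (P Q : Polynomial ℚ) : e0 (P*Q) = e0 P * e0 Q := by simp [e0]
lemma e1_mul (P Q : Polynomial ℚ) : e1 (P*Q) = e1 P * e0 Q + e0 P * e1 Q := by
  simp [e1, e0, derivative_mul]
lemma e2_mul (P Q : Polynomial ℚ) :
    e2 (P*Q) = e2 P * e0 Q + 2 * e1 P * e1 Q + e0 P * e2 Q := by
  simp [e2, e1, e0, derivative_mul]; ring

lemma sum_id (m : ℕ) : ∑ j ∈ Finset.range m, (j:ℚ) = m*(m-1)/2 := by
  induction m with
  | zero => simp
  | succ n ih => rw [Finset.sum_range_succ, ih]; push_cast; ring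

lemma sum_id2 (m : ℕ) : ∑ j ∈ Finset.range m, (j:ℚ)*((j:ℚ)-1) = m*(m-1)*(m-2)/3 := by
  induction m with
  | zero => simp
  | succ n ih => rw [Finset.sum_range_succ, ih]; push_cast; ring

lemma e0_qInt (m : ℕ) : e0 (qInt m) = m := by
  simp [e0, qInt, eval_finset_sum]

lemma e1_qInt (m : ℕ) : e1 (qInt m) = m*(m-1)/2 := by
  rw [e1, qInt, derivative_sum, eval_finset_sum, ← sum_id]
  apply Finset.sum_congr rfl
  intro j _
  simp [derivative_X_pow]

lemma ddxpow (j : ℕ) : ((derivative (derivative (X ^ j : Polynomial ℚ))).eval 1) = (j:ℚ)*((j:ℚ)-1) := by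
  match j with
  | 0 => simp
  | 1 => simp
  | (k+2) =>
    simp [derivative_X_pow]
    ring

lemma e2_qInt (m : ℕ) : e2 (qInt m) = m*(m-1)*(m-2)/3 := by
  rw [e2, qInt, derivative_sum, derivative_sum, eval_finset_sum, ← sum_id2]
  exact Finset.sum_congr rfl fun j _ => ddxpow j

lemma moment1 (F : Polynomial ℚ) :
    ∑ j ∈ Finset.range (F.natDegree + 1), (j:ℚ) * F.coeff j = e1 F := by
  have hd : (derivative F).natDegree < F.natDegree + 1 :=
    Nat.lt_succ_of_le ((natDegree_derivative_le F).trans (Nat.sub_le _ _))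
  rw [e1, eval_eq_sum_range' hd 1]
  have : ∑ j ∈ Finset.range (F.natDegree + 1 + 1), (j:ℚ) * F.coeff j
      = ∑ j ∈ Finset.range (F.natDegree + 1), (j:ℚ) * F.coeff j := by
    rw [Finset.sum_range_succ]
    simp [coeff_eq_zero_of_natDegree_lt (Nat.lt_succ_self _)]
  rw [← this, Finset.sum_range_succ']
  simp [coeff_derivative]
  exact Finset.sum_congr rfl fun i _ => by ring

lemma moment2 (F : Polynomial ℚ) :
    ∑ j ∈ Finset.range (F.natDegree + 1), (j:ℚ)^2 * F.coeff j = e2 F + e1 F := by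
  have key : ∑ j ∈ Finset.range (F.natDegree + 1), (j:ℚ)*((j:ℚ)-1) * F.coeff j = e2 F := by
    have hd : (derivative (derivative F)).natDegree < F.natDegree + 1 :=
      Nat.lt_succ_of_le (((natDegree_derivative_le _).trans (Nat.sub_le _ _)).trans
        ((natDegree_derivative_le F).trans (Nat.sub_le _ _)))
    rw [e2, eval_eq_sum_range' hd 1]
    have h2 : ∑ j ∈ Finset.range (F.natDegree + 1 + 2), (j:ℚ)*((j:ℚ)-1) * F.coeff j
        = ∑ j ∈ Finset.range (F.natDegree + 1), (j:ℚ)*((j:ℚ)-1) * F.coeff j := by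
      rw [Finset.sum_range_succ, Finset.sum_range_succ]
      simp [coeff_eq_zero_of_natDegree_lt (Nat.lt_succ_self _),
        coeff_eq_zero_of_natDegree_lt (Nat.lt_succ_of_le (Nat.le_succ _))]
    rw [← h2, Finset.sum_range_succ', Finset.sum_range_succ']
    simp [coeff_derivative]
    exact Finset.sum_congr rfl fun i _ => by ring
  rw [← key, ← moment1, ← Finset.sum_add_distrib]
  exact Finset.sum_congr rfl fun j _ => by ring

noncomputable def mu (P : Polynomial ℚ) : ℚ := e1 P / e0 P
noncomputable def vv (P : Polynomial ℚ) : ℚ := (e2 P + e1 P) / e0 P - (e1 P / e0 P)^2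

lemma mul_stats (P Q : Polynomial ℚ) (hP : e0 P ≠ 0) (hQ : e0 Q ≠ 0) :
    mu (P*Q) = mu P + mu Q ∧ vv (P*Q) = vv P + vv Q := by
  constructor
  · rw [mu, mu, mu, e1_mul, e0_mul]; field_simp
  · rw [vv, vv, vv, e2_mul, e1_mul, e0_mul]; field_simp; ring

lemma prod_stats (s : Finset ℕ) (f : ℕ → Polynomial ℚ) (h : ∀ i ∈ s, 0 < e0 (f i)) :
    0 < e0 (∏ i ∈ s, f i) ∧
    mu (∏ i ∈ s, f i) = ∑ i ∈ s, mu (f i) ∧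
    vv (∏ i ∈ s, f i) = ∑ i ∈ s, vv (f i) := by
  induction s using Finset.cons_induction with
  | empty => simp [e0, e1, e2, mu, vv]
  | cons a s ha ih =>
    obtain ⟨h0, h1, h2⟩ := ih (fun i hi => h i (Finset.mem_cons_of_mem hi))
    have hfa := h a (Finset.mem_cons_self a s)
    rw [Finset.prod_cons, Finset.sum_cons, Finset.sum_cons]
    obtain ⟨m1, m2⟩ := mul_stats (f a) _ hfa.ne' h0.ne'
    refine ⟨by rw [e0_mul]; positivity, by rw [m1, h1], by rw [m2, h2]⟩

lemma mu_qInt (m : ℕ) (hm : 0 < m) : mu (qInt m) = ((m:ℚ)-1)/2 := by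
  have : (m:ℚ) ≠ 0 := Nat.cast_ne_zero.mpr hm.ne'
  rw [mu, e1_qInt, e0_qInt]; field_simp

lemma vv_qInt (m : ℕ) (hm : 0 < m) : vv (qInt m) = ((m:ℚ)^2-1)/12 := by
  have : (m:ℚ) ≠ 0 := Nat.cast_ne_zero.mpr hm.ne'
  rw [vv, e2_qInt, e1_qInt, e0_qInt]; field_simp; ring

lemma key1 (a b : ℕ) :
    ∑ i ∈ Finset.range b, ((((a+i+1:ℕ):ℚ))-1)/2 - ∑ i ∈ Finset.range b, ((((i+1:ℕ):ℚ))-1)/2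
      = (a:ℚ)*b/2 := by
  induction b with
  | zero => simp
  | succ n ih =>
    rw [Finset.sum_range_succ, Finset.sum_range_succ]
    push_cast
    push_cast at ih
    linarith

lemma key2 (a b : ℕ) :
    ∑ i ∈ Finset.range b, ((((a+i+1:ℕ):ℚ))^2-1)/12 - ∑ i ∈ Finset.range b, ((((i+1:ℕ):ℚ))^2-1)/12
      = (a:ℚ)*b*((a:ℚ)+b+1)/12 := by
  induction b with
  | zero => simp
  | succ n ih =>
    rw [Finset.sum_range_succ, Finset.sum_range_succ]
    push_cast
    push_cast at ih
    nlinarith [ih]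

theorem stmt_8 (a b : ℕ) (ha : 0 < a) (hb : 0 < b) (F : Polynomial ℚ)
    (hF : F * ∏ i ∈ Finset.range b, qInt (i + 1)
        = ∏ i ∈ Finset.range b, qInt (a + i + 1))
    (hpos : ∀ j, 0 ≤ F.coeff j) :
    polyExp F = (a : ℚ) * b / 2 ∧
    polyVar F = (a : ℚ) * b * ((a : ℚ) + b + 1) / 12 := by
  set G := ∏ i ∈ Finset.range b, qInt (i + 1) with hG
  set H := ∏ i ∈ Finset.range b, qInt (a + i + 1) with hH
  have hGpos : ∀ i ∈ Finset.range b, 0 < e0 (qInt (i+1)) := by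
    intro i _; rw [e0_qInt]; positivity
  have hHpos : ∀ i ∈ Finset.range b, 0 < e0 (qInt (a+i+1)) := by
    intro i _; rw [e0_qInt]; positivity
  obtain ⟨hG0, hGmu, hGvv⟩ := prod_stats (Finset.range b) _ hGpos
  obtain ⟨hH0, hHmu, hHvv⟩ := prod_stats (Finset.range b) _ hHpos
  have hFG : e0 F * e0 G = e0 H := by rw [← e0_mul, hF]
  have hF0 : e0 F ≠ 0 := by
    intro h; rw [h, zero_mul] at hFG; exact hH0.ne hFG
  obtain ⟨m1, m2⟩ := mul_stats F G hF0 hG0.ne'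
  rw [hF] at m1 m2
  have hmuF : mu F = (a:ℚ)*b/2 := by
    have : mu F = mu H - mu G := by rw [m1]; ring
    rw [this, hGmu, hHmu, ← key1 a b]
    congr 1
    · exact Finset.sum_congr rfl fun i hi => by rw [mu_qInt _ (by omega)]
    · exact Finset.sum_congr rfl fun i hi => by rw [mu_qInt _ (by omega)]
  have hvvF : vv F = (a:ℚ)*b*((a:ℚ)+b+1)/12 := by
    have : vv F = vv H - vv G := by rw [m2]; ring
    rw [this, hGvv, hHvv, ← key2 a b]
    congr 1
    · exact Finset.sum_congr rfl fun i hi => by rw [vv_qInt _ (by omega)]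
    · exact Finset.sum_congr rfl fun i hi => by rw [vv_qInt _ (by omega)]
  have hpe : polyExp F = mu F := by rw [polyExp, moment1]; rfl
  refine ⟨by rw [hpe, hmuF], ?_⟩
  rw [polyVar, moment2, hpe]
  show (e2 F + e1 F) / e0 F - (mu F)^2 = _
  rw [show (e2 F + e1 F) / e0 F - (mu F)^2 = vv F from rfl, hvvF]
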